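/- For \lambda \in \mathbb{C} with |\lambda| < 1, let p_\lambda(z) = 1/(1 - \lambda z). Then the linear span of the family {p_\lambda : |\lambda| < 1} is \|\cdot\|_*-dense in the space of power series with radius of convergence greater than 1: for every such power series f and every \delta > 0 there exist finitely many \lambda_1, \dots, \lambda_k in the open unit disk and complex coefficients c_1, \dots, c_k such that \|f - \sum_{i=1}^k c_i p_{\lambda_i}\|_* \le \delta. -/

import Mathlib

open Finset Complex

lemma sum_zpow_root (n : ℕ) (hn : 0 < n) (d : ℤ) :
    ∑ j ∈ range n, (Complex.exp (2 * Real.pi * Complex.I / n) ^ d) ^ j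
      = if (n:ℤ) ∣ d then (n:ℂ) else 0 := by
  set ζ := Complex.exp (2 * Real.pi * Complex.I / n) with hζ
  have hprim : IsPrimitiveRoot ζ n := Complex.isPrimitiveRoot_exp n hn.ne'
  have hζn : ζ ^ (n:ℤ) = 1 := by
    rw [zpow_natCast]; exact hprim.pow_eq_one
  have hwn : (ζ ^ d) ^ n = 1 := by
    rw [← zpow_natCast (ζ ^ d) n, ← zpow_mul, mul_comm, zpow_mul, hζn, one_zpow]
  by_cases h : (n:ℤ) ∣ d
  · have : ζ ^ d = 1 := (hprim.zpow_eq_one_iff_dvd d).2 h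
    simp [this, h]
  · have hne : ζ ^ d ≠ 1 := fun hh => h ((hprim.zpow_eq_one_iff_dvd d).1 hh)
    rw [geom_sum_eq hne, hwn]
    simp [h]

lemma coeff_eq (n : ℕ) (hn : 0 < n) (t : ℝ) (ht : 0 < t) (a : ℕ → ℂ) (k : ℕ) :
    (∑ j : Fin n, (((n:ℂ))⁻¹ *
        ∑ m ∈ range n, a m / ((t:ℂ)^m * (Complex.exp (2 * Real.pi * Complex.I / n)) ^ ((j:ℕ)*m)))
        * ((t:ℂ) * (Complex.exp (2 * Real.pi * Complex.I / n)) ^ (j:ℕ))^k)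
    = ∑ m ∈ range n, (if (n:ℤ) ∣ ((k:ℤ) - m) then a m * (t:ℂ)^k / (t:ℂ)^m else 0) := by
  set ζ := Complex.exp (2 * Real.pi * Complex.I / n) with hζ
  have hζ0 : ζ ≠ 0 := Complex.exp_ne_zero _
  have ht0 : (t:ℂ) ≠ 0 := by exact_mod_cast ht.ne'
  have hn0 : (n:ℂ) ≠ 0 := by exact_mod_cast hn.ne'
  rw [Fin.sum_univ_eq_sum_range (fun j => (((n:ℂ))⁻¹ *
        ∑ m ∈ range n, a m / ((t:ℂ)^m * ζ ^ (j*m))) * ((t:ℂ) * ζ ^ j)^k)]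
  have step1 : ∀ j ∈ range n, (((n:ℂ))⁻¹ *
        ∑ m ∈ range n, a m / ((t:ℂ)^m * ζ ^ (j*m))) * ((t:ℂ) * ζ ^ j)^k
      = ∑ m ∈ range n, (n:ℂ)⁻¹ * (a m * (t:ℂ)^k / (t:ℂ)^m) * (ζ ^ ((k:ℤ) - m))^j := by
    intro j _
    rw [mul_comm, ← mul_assoc, Finset.mul_sum]
    refine Finset.sum_congr rfl fun m _ => ?_
    have hz : (ζ ^ ((k:ℤ) - m))^j = ζ ^ (j*k) / ζ ^ (j*m) := by
      rw [zpow_sub₀ hζ0, zpow_natCast, zpow_natCast, div_pow, ← pow_mul, ← pow_mul,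
        mul_comm k j, mul_comm m j]
    rw [hz]
    field_simp
    ring
  rw [Finset.sum_congr rfl step1, Finset.sum_comm]
  refine Finset.sum_congr rfl fun m _ => ?_
  rw [← Finset.mul_sum, sum_zpow_root n hn ((k:ℤ) - m)]
  by_cases h : (n:ℤ) ∣ ((k:ℤ) - m)
  · simp [h]
    field_simp
  · simp [h]

lemma summable_shift (b : ℝ) {q : ℝ} (hq : ‖q‖ < 1) :
    Summable (fun i : ℕ => ((i:ℝ)+b)^2 * q^i) := by
  have h0 : Summable fun i:ℕ => q^i := summable_geometric_of_norm_lt_one hq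
  have h1 := summable_pow_mul_geometric_of_norm_lt_one 1 hq
  have h2 := summable_pow_mul_geometric_of_norm_lt_one 2 hq
  have := (h2.add ((h1.mul_left (2*b)).add (h0.mul_left (b^2))))
  exact this.congr (fun i => by push_cast; ring)

theorem geometric_series_span_star_norm_dense (a : ℕ → ℂ)
    (hrad : ∃ r : ℝ, 1 < r ∧ Summable fun k => ‖a k‖ * r ^ k)
    (δ : ℝ) (hδ : 0 < δ) :
    ∃ (k : ℕ) (lam : Fin k → ℂ) (c : Fin k → ℂ),
      (∀ i, ‖lam i‖ < 1) ∧
      (∑' m : ℕ, (m : ℝ) ^ 2 * ‖a m - ∑ i, c i * lam i ^ m‖) ≤ δ := by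
  obtain ⟨r, hr1, hrs⟩ := hrad
  have hr0 : (0:ℝ) < r := one_pos.trans hr1
  -- summability of k² |a k|
  have hrinv : ‖r⁻¹‖ < 1 := by
    rw [Real.norm_eq_abs, abs_of_pos (inv_pos.2 hr0)]
    exact inv_lt_one_of_one_lt₀ hr1
  have Sgeom := summable_pow_mul_geometric_of_norm_lt_one 2 hrinv
  obtain ⟨M, hM⟩ := Sgeom.tendsto_atTop_zero.bddAbove_range
  have hM' : ∀ k : ℕ, (k:ℝ)^2 * r⁻¹^k ≤ M := fun k => hM ⟨k, rfl⟩
  set g : ℕ → ℝ := fun k => (k:ℝ)^2 * ‖a k‖ with hg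
  have S : Summable g := by
    refine Summable.of_nonneg_of_le (fun k => ?_) (fun k => ?_) (hrs.mul_left M)
    · positivity
    · have h1 : g k = ((k:ℝ)^2 * r⁻¹^k) * (‖a k‖ * r^k) := by
        rw [hg]
        field_simp
        rw [mul_assoc _ ((1/r)^k), ← mul_pow, one_div, inv_mul_cancel₀ hr0.ne', one_pow, mul_one]
      rw [h1]
      exact mul_le_mul_of_nonneg_right (hM' k) (by positivity)
  -- choose n with tail ≤ δ/2
  obtain ⟨N0, hN0⟩ := (Metric.tendsto_atTop.1 S.hasSum.tendsto_sum_nat) (δ/2) (by linarith)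
  set n := max N0 1 with hndef
  have hn : 0 < n := lt_of_lt_of_le one_pos (le_max_right _ _)
  have htail : (∑' i : ℕ, g (i + n)) ≤ δ / 2 := by
    have h2 := Summable.sum_add_tsum_nat_add n S
    have h3 := hN0 n (le_max_left _ _)
    rw [Real.dist_eq, abs_sub_lt_iff] at h3
    linarith [h3.2]
  set A := ∑ m ∈ range n, ‖a m‖ with hA
  have hA0 : 0 ≤ A := Finset.sum_nonneg fun m _ => norm_nonneg _
  have hhalf : ‖(1/2 : ℝ)‖ < 1 := by
    rw [Real.norm_eq_abs, abs_of_pos (by norm_num : (0:ℝ) < 1/2)]; norm_num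
  set C := ∑' i : ℕ, ((i:ℝ)+n)^2 * (1/2:ℝ)^i with hCdef
  have hC : Summable (fun i : ℕ => ((i:ℝ)+n)^2 * (1/2:ℝ)^i) := summable_shift n hhalf
  have hC0 : 0 ≤ C := tsum_nonneg fun i => by positivity
  -- choose t
  have hAC1 : (0:ℝ) < A*C+1 := by nlinarith [mul_nonneg hA0 hC0]
  obtain ⟨t, ht0, ht2, htsmall⟩ : ∃ t : ℝ, 0 < t ∧ t ≤ 1/2 ∧ A * t * C ≤ δ/2 := by
    set s := min (1/2 : ℝ) (δ / (2*(A*C+1))) with hs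
    have hs0 : 0 < s := lt_min (by norm_num) (div_pos hδ (by linarith))
    refine ⟨s, hs0, min_le_left _ _, ?_⟩
    have h1 : (A*C+1) * s ≤ (A*C+1) * (δ / (2*(A*C+1))) :=
      mul_le_mul_of_nonneg_left (min_le_right _ _) hAC1.le
    have h2 : (A*C+1) * (δ / (2*(A*C+1))) = δ/2 := by
      field_simp
    have h3 : A*C*s + s ≤ δ/2 := by nlinarith
    nlinarith [h3, hs0]
  have ht1 : t ≤ 1 := ht2.trans (by norm_num)
  -- the data
  set ζ := Complex.exp (2 * Real.pi * Complex.I / n) with hζ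
  have hprim : IsPrimitiveRoot ζ n := Complex.isPrimitiveRoot_exp n hn.ne'
  have hζabs : ‖ζ‖ = 1 := by
    have h1 : (2 * Real.pi * Complex.I / n) = ((2*Real.pi/n : ℝ) : ℂ) * Complex.I := by
      push_cast; ring
    rw [hζ, h1, Complex.norm_exp_ofReal_mul_I]
  have ht0' : (t:ℂ) ≠ 0 := by exact_mod_cast ht0.ne'
  refine ⟨n, fun j => (t:ℂ) * ζ ^ (j:ℕ),
    fun j => ((n:ℂ))⁻¹ * ∑ m ∈ range n, a m / ((t:ℂ)^m * ζ ^ ((j:ℕ)*m)), ?_, ?_⟩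
  · intro i
    rw [norm_mul, norm_pow, hζabs, one_pow, mul_one, Complex.norm_real, Real.norm_eq_abs, abs_of_pos ht0]
    linarith
  -- main estimate
  set b : ℕ → ℂ := fun k => ∑ m ∈ range n,
      (if (n:ℤ) ∣ ((k:ℤ) - m) then a m * (t:ℂ)^k / (t:ℂ)^m else 0) with hbdef
  have hb : ∀ k : ℕ, (∑ j : Fin n, (((n:ℂ))⁻¹ *
      ∑ m ∈ range n, a m / ((t:ℂ)^m * ζ ^ ((j:ℕ)*m))) * ((t:ℂ) * ζ ^ (j:ℕ))^k) = b k :=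
    fun k => coeff_eq n hn t ht0 a k
  have hlow : ∀ k : ℕ, k < n → b k = a k := by
    intro k hk
    show (∑ m ∈ range n, (if (n:ℤ) ∣ ((k:ℤ) - m) then a m * (t:ℂ)^k / (t:ℂ)^m else 0)) = a k
    rw [Finset.sum_eq_single_of_mem k (Finset.mem_range.2 hk)]
    · rw [if_pos (by simp), mul_div_assoc, div_self (pow_ne_zero _ ht0'), mul_one]
    · intro m hm hmk
      rw [if_neg]
      intro hdvd
      have hmn := Finset.mem_range.1 hm
      have h0 : ((k:ℤ) - m) = 0 := by
        refine Int.eq_zero_of_dvd_of_natAbs_lt_natAbs hdvd ?_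
        omega
      exact hmk (by omega)
  have hAbound : ∀ k : ℕ, n ≤ k → ‖b k‖ ≤ A * t^(k+1-n) := by
    intro k hk
    show ‖∑ m ∈ range n, (if (n:ℤ) ∣ ((k:ℤ) - m) then a m * (t:ℂ)^k / (t:ℂ)^m else 0)‖
      ≤ A * t^(k+1-n)
    refine (norm_sum_le _ _).trans ?_
    rw [hA, Finset.sum_mul]
    refine Finset.sum_le_sum fun m hm => ?_
    have hmn := Finset.mem_range.1 hm
    by_cases h : (n:ℤ) ∣ ((k:ℤ) - m)
    · rw [if_pos h, norm_div, norm_mul, norm_pow, norm_pow, Complex.norm_real,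
        Real.norm_eq_abs, abs_of_pos ht0]
      rw [div_le_iff₀ (pow_pos ht0 m), mul_assoc, ← pow_add]
      refine mul_le_mul_of_nonneg_left ?_ (norm_nonneg _)
      exact pow_le_pow_of_le_one ht0.le ht1 (by omega)
    · rw [if_neg h, norm_zero]
      exact mul_nonneg (norm_nonneg _) (pow_nonneg ht0.le _)
  -- the comparison function
  set h : ℕ → ℝ := fun k => if k < n then 0 else
      (k:ℝ)^2 * (‖a k‖ + A * t^(k+1-n)) with hhdef
  have hle : ∀ k : ℕ, (k:ℝ)^2 * ‖a k - b k‖ ≤ h k := by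
    intro k
    show (k:ℝ)^2 * ‖a k - b k‖ ≤ (if k < n then 0 else
      (k:ℝ)^2 * (‖a k‖ + A * t^(k+1-n)))
    by_cases hk : k < n
    · rw [if_pos hk, hlow k hk, sub_self, norm_zero, mul_zero]
    · rw [if_neg hk]
      push_neg at hk
      refine mul_le_mul_of_nonneg_left ?_ (by positivity)
      calc ‖a k - b k‖ ≤ ‖a k‖ + ‖b k‖ := by
            exact norm_sub_le _ _
        _ ≤ ‖a k‖ + A * t^(k+1-n) := by linarith [hAbound k hk]
  have htnorm : ‖t‖ < 1 := by rw [Real.norm_eq_abs, abs_of_pos ht0]; linarith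
  have hSt : Summable (fun i : ℕ => ((i:ℝ)+n)^2 * t^i) := summable_shift n htnorm
  have hshift : ∀ i : ℕ, h (i + n) = g (i+n) + (A*t) * (((i:ℝ)+n)^2 * t^i) := by
    intro i
    show (if i + n < n then 0 else ((i+n:ℕ):ℝ)^2 * (‖a (i+n)‖ + A * t^(i+n+1-n)))
      = g (i+n) + (A*t) * (((i:ℝ)+n)^2 * t^i)
    rw [if_neg (by omega), hg]
    have : i + n + 1 - n = i + 1 := by omega
    rw [this]
    push_cast
    ring
  have Sh : Summable h := by
    rw [← summable_nat_add_iff n]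
    refine Summable.congr ?_ (fun i => (hshift i).symm)
    exact (((summable_nat_add_iff n).2 S).add (hSt.mul_left (A*t)))
  have Sg' : Summable (fun k : ℕ => (k:ℝ)^2 * ‖a k - b k‖) :=
    Summable.of_nonneg_of_le (fun k => by positivity) hle Sh
  have key : (∑' k : ℕ, (k:ℝ)^2 * ‖a k - b k‖) ≤ δ := by
    refine (Summable.tsum_le_tsum hle Sg' Sh).trans ?_
    have h4 : ∑ i ∈ range n, h i = 0 := by
      refine Finset.sum_eq_zero fun i hi => ?_
      show (if i < n then 0 else (i:ℝ)^2 * (‖a i‖ + A * t^(i+1-n))) = 0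
      rw [if_pos (Finset.mem_range.1 hi)]
    have h5 := Summable.sum_add_tsum_nat_add n Sh
    rw [h4, zero_add] at h5
    rw [← h5]
    have h6 : (∑' i : ℕ, h (i + n)) =
        (∑' i : ℕ, g (i+n)) + (A*t) * ∑' i : ℕ, ((i:ℝ)+n)^2 * t^i := by
      rw [← tsum_mul_left]
      rw [← Summable.tsum_add ((summable_nat_add_iff n).2 S) (hSt.mul_left (A*t))]
      exact tsum_congr hshift
    rw [h6]
    have h7 : (A*t) * (∑' i : ℕ, ((i:ℝ)+n)^2 * t^i) ≤ (A*t) * C := by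
      refine mul_le_mul_of_nonneg_left ?_ (mul_nonneg hA0 ht0.le)
      refine Summable.tsum_le_tsum (fun i => ?_) hSt hC
      exact mul_le_mul_of_nonneg_left (pow_le_pow_left₀ ht0.le ht2 i)
        (sq_nonneg _)
    have h8 : (A*t) * C ≤ δ/2 := by nlinarith
    linarith [htail]
  calc (∑' m : ℕ, (m:ℝ)^2 * ‖a m - ∑ j : Fin n, (((n:ℂ))⁻¹ *
      ∑ l ∈ range n, a l / ((t:ℂ)^l * ζ ^ ((j:ℕ)*l))) * ((t:ℂ) * ζ ^ (j:ℕ))^m‖)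
      = ∑' k : ℕ, (k:ℝ)^2 * ‖a k - b k‖ := by
        exact tsum_congr fun k => by rw [hb k]
    _ ≤ δ := key
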